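/- (Radon–Riesz property) Let 0 < η < 1 and M > 0. Suppose xₙ ∈ ℓ² satisfy R_η(xₙ) ≤ M, xₙ ⇀ x weakly in ℓ², and R_η(xₙ) → R_η(x). Then xₙ → x strongly in ℓ². -/

import Mathlib

open Filter

set_option maxHeartbeats 1000000

/-- For a nonnegative summable sequence, the "cross term" `(∑c)² - ∑c²` dominates
its finite truncations. -/
lemma aux_partial_cross_le (c : ℕ → ℝ) (hc : ∀ i, 0 ≤ c i) (h1 : Summable c)
    (h2 : Summable (fun i => (c i) ^ 2)) (N : ℕ) :
    (∑ i ∈ Finset.range N, c i) ^ 2 - ∑ i ∈ Finset.range N, (c i) ^ 2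
      ≤ (∑' i, c i) ^ 2 - ∑' i, (c i) ^ 2 := by
  have h1' : Summable (fun i => c (i + N)) := (summable_nat_add_iff N).2 h1
  have h2' : Summable (fun i => (c (i + N)) ^ 2) := (summable_nat_add_iff N).2 h2
  have hC : ∑ i ∈ Finset.range N, c i + ∑' i, c (i + N) = ∑' i, c i :=
    Summable.sum_add_tsum_nat_add N h1
  have hC2 : ∑ i ∈ Finset.range N, (c i) ^ 2 + ∑' i, (c (i + N)) ^ 2 = ∑' i, (c i) ^ 2 :=
    Summable.sum_add_tsum_nat_add N h2
  set S := ∑ i ∈ Finset.range N, c i with hS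
  set T := ∑' i, c (i + N) with hT
  have hS0 : 0 ≤ S := Finset.sum_nonneg fun i _ => hc i
  have hT0 : 0 ≤ T := tsum_nonneg fun i => hc _
  have hT2 : ∑' i, (c (i + N)) ^ 2 ≤ T * T := by
    have hb : ∀ i, (c (i + N)) ^ 2 ≤ c (i + N) * T := by
      intro i
      have : c (i + N) ≤ T := Summable.le_tsum h1' i fun j _ => hc _
      have h0 := hc (i + N)
      nlinarith
    calc ∑' i, (c (i + N)) ^ 2 ≤ ∑' i, c (i + N) * T :=
          Summable.tsum_le_tsum hb h2' (h1'.mul_right T)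
      _ = T * T := tsum_mul_right
  nlinarith [(tsum_nonneg fun i => sq_nonneg (c (i + N)) : 0 ≤ ∑' i, (c (i + N)) ^ 2)]

/-- Radon–Riesz property of `R_η(z) = ‖z‖₁² − η‖z‖₂²` for `0 < η < 1`: if
`R_η(xₙ) ≤ M`, `xₙ ⇀ x` weakly in `ℓ²` and `R_η(xₙ) → R_η(x)`, then `xₙ → x`
strongly in `ℓ²`. -/
theorem stmt_6 (η M : ℝ) (hη0 : 0 < η) (hη1 : η < 1) (hM : 0 < M)
    (xn : ℕ → ℕ → ℝ) (x : ℕ → ℝ)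
    (hxn1 : ∀ n, Summable (fun i => |xn n i|))
    (hxn2 : ∀ n, Summable (fun i => (xn n i) ^ 2))
    (hx2 : Summable (fun i => (x i) ^ 2))
    (hbound : ∀ n, (∑' i, |xn n i|) ^ 2 - η * ∑' i, (xn n i) ^ 2 ≤ M)
    (hweak : ∀ y : ℕ → ℝ, Summable (fun i => (y i) ^ 2) →
      Tendsto (fun n => ∑' i, xn n i * y i) atTop (nhds (∑' i, x i * y i)))
    (hR : Tendsto (fun n => (∑' i, |xn n i|) ^ 2 - η * ∑' i, (xn n i) ^ 2) atTop
      (nhds ((∑' i, |x i|) ^ 2 - η * ∑' i, (x i) ^ 2))) :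
    Tendsto (fun n => Real.sqrt (∑' i, (xn n i - x i) ^ 2)) atTop (nhds 0) := by
  set a : ℕ → ℝ := fun n => ∑' i, |xn n i| with ha
  set b : ℕ → ℝ := fun n => ∑' i, (xn n i) ^ 2 with hb
  set B : ℝ := ∑' i, (x i) ^ 2 with hB
  have hb0 : ∀ n, 0 ≤ b n := fun n => tsum_nonneg fun i => sq_nonneg _
  have hB0 : 0 ≤ B := tsum_nonneg fun i => sq_nonneg _
  -- coordinatewise convergence from weak convergence
  have hcoord : ∀ i, Tendsto (fun n => xn n i) atTop (nhds (x i)) := by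
    intro i
    have hy : Summable (fun j => ((if j = i then (1:ℝ) else 0)) ^ 2) := by
      apply summable_of_ne_finset_zero (s := {i})
      intro j hj
      simp at hj
      simp [hj]
    have key := hweak (fun j => if j = i then (1:ℝ) else 0) hy
    have e1 : ∀ z : ℕ → ℝ, ∑' j, z j * (if j = i then (1:ℝ) else 0) = z i := by
      intro z
      rw [tsum_eq_single i (by intro j hj; simp [hj])]
      simp
    rw [e1 x] at key
    exact key.congr fun n => e1 (xn n)
  -- squared abs = square
  have habs2 : ∀ n, Summable (fun i => |xn n i| ^ 2) := by
    intro n; simpa [sq_abs] using hxn2 n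
  -- A_n := a n ^ 2 - b n ≤ M
  have hAle : ∀ n, (a n) ^ 2 - b n ≤ M := by
    intro n
    have h1 := hbound n
    have h2 := hb0 n
    nlinarith
  -- finite truncation functional
  set G : ℕ → (ℕ → ℝ) → ℝ := fun N z =>
    (∑ i ∈ Finset.range N, |z i|) ^ 2 - ∑ i ∈ Finset.range N, (z i) ^ 2 with hG
  have hFle : ∀ N n, G N (xn n) ≤ (a n) ^ 2 - b n := by
    intro N n
    have := aux_partial_cross_le (fun i => |xn n i|) (fun i => abs_nonneg _)
      (hxn1 n) (by simpa [sq_abs] using hxn2 n) N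
    simpa [hG, sq_abs] using this
  have hGtend : ∀ N, Tendsto (fun n => G N (xn n)) atTop (nhds (G N x)) := by
    intro N
    apply Tendsto.sub
    · exact (tendsto_finset_sum _ (fun i _ => (hcoord i).abs)).pow 2
    · exact tendsto_finset_sum _ (fun i _ => (hcoord i).pow 2)
  have hGleM : ∀ N, G N x ≤ M := by
    intro N
    exact le_of_tendsto (hGtend N)
      (Eventually.of_forall fun n => (hFle N n).trans (hAle n))
  -- x is ℓ¹
  have hx1 : Summable (fun i => |x i|) := by
    apply summable_of_sum_range_le (c := Real.sqrt (M + B)) (fun i => abs_nonneg _)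
    intro N
    have hpart : ∑ i ∈ Finset.range N, (x i) ^ 2 ≤ B :=
      Summable.sum_le_tsum _ (fun i _ => sq_nonneg _) hx2
    have h1 : (∑ i ∈ Finset.range N, |x i|) ^ 2 ≤ M + B := by
      have := hGleM N
      simp only [hG] at this
      linarith
    rw [Real.le_sqrt (Finset.sum_nonneg fun i _ => abs_nonneg _) (by positivity)]
    exact h1
  set A : ℝ := ∑' i, |x i| with hA
  have hGtendx : Tendsto (fun N => G N x) atTop (nhds (A ^ 2 - B)) := by
    apply Tendsto.sub
    · exact (hx1.hasSum.tendsto_sum_nat).pow 2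
    · exact hx2.hasSum.tendsto_sum_nat
  -- main convergence: b n → B
  have hbB : Tendsto b atTop (nhds B) := by
    rw [tendsto_order]
    constructor
    · -- lower bound: c < B → eventually c < b n
      intro c hc
      obtain ⟨N, hN⟩ := ((hx2.hasSum.tendsto_sum_nat).eventually_const_lt hc).exists
      have hev := (tendsto_finset_sum (Finset.range N)
        (fun i _ => (hcoord i).pow 2)).eventually_const_lt hN
      filter_upwards [hev] with n hn
      exact hn.trans_le (Summable.sum_le_tsum _ (fun i _ => sq_nonneg _) (hxn2 n))
    · -- upper bound: B < c → eventually b n < c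
      intro c hc
      set δ : ℝ := (1 - η) * (c - B) / 4 with hδ
      have hδ0 : 0 < δ := by
        apply div_pos (mul_pos (by linarith) (by linarith)) (by norm_num)
      -- choose N with G N x > A^2 - B - δ
      obtain ⟨N, hN⟩ := (hGtendx.eventually_const_lt (by linarith : A ^ 2 - B - δ < A ^ 2 - B)).exists
      have hev1 := (hGtend N).eventually_const_lt (by linarith : G N x - δ < G N x)
      have hev2 : ∀ᶠ n in atTop, (a n) ^ 2 - η * b n < (A ^ 2 - η * B) + δ :=
        hR.eventually_lt_const (by linarith)
      filter_upwards [hev1, hev2] with n h1 h2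
      have h3 : G N (xn n) ≤ (a n) ^ 2 - b n := hFle N n
      -- (1-η) b n = (a n ^2 - η b n) - (a n ^2 - b n) < (A^2 - ηB + δ) - (A^2 - B - 2δ)
      nlinarith
  -- cross term convergence
  have hcross : Tendsto (fun n => ∑' i, xn n i * x i) atTop (nhds B) := by
    have := hweak x hx2
    have e : ∑' i, x i * x i = B := by
      simp only [hB]; congr 1; funext i; ring
    rwa [e] at this
  have hsumcross : ∀ n, Summable (fun i => xn n i * x i) := by
    intro n
    apply Summable.of_abs
    refine Summable.of_nonneg_of_le (fun i => abs_nonneg _) (fun i => ?_)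
      (((hxn2 n).div_const 2).add (hx2.div_const 2))
    rw [abs_mul]
    nlinarith [sq_nonneg (|xn n i| - |x i|), sq_abs (xn n i), sq_abs (x i),
      abs_nonneg (xn n i), abs_nonneg (x i)]
  -- expansion of the squared distance
  have hexpand : ∀ n, ∑' i, (xn n i - x i) ^ 2
      = b n - (2 * ∑' i, xn n i * x i - B) := by
    intro n
    have hs1 : Summable (fun i => 2 * (xn n i * x i) - (x i) ^ 2) :=
      ((hsumcross n).mul_left 2).sub hx2
    have e1 : ∀ i, (xn n i - x i) ^ 2
        = (xn n i) ^ 2 - (2 * (xn n i * x i) - (x i) ^ 2) := by intro i; ring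
    calc ∑' i, (xn n i - x i) ^ 2
        = ∑' i, ((xn n i) ^ 2 - (2 * (xn n i * x i) - (x i) ^ 2)) := by
          congr 1; funext i; exact e1 i
      _ = b n - ∑' i, (2 * (xn n i * x i) - (x i) ^ 2) := Summable.tsum_sub (hxn2 n) hs1
      _ = b n - (∑' i, 2 * (xn n i * x i) - B) := by
          rw [Summable.tsum_sub ((hsumcross n).mul_left 2) hx2]
      _ = b n - (2 * ∑' i, xn n i * x i - B) := by rw [tsum_mul_left]
  have hfinal : Tendsto (fun n => ∑' i, (xn n i - x i) ^ 2) atTop (nhds 0) := by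
    have h := hbB.sub ((hcross.const_mul 2).sub (tendsto_const_nhds (x := B)))
    have e0 : B - (2 * B - B) = 0 := by ring
    rw [e0] at h
    exact h.congr fun n => (hexpand n).symm
  simpa [Real.sqrt_zero] using hfinal.sqrt
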